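/- For any connected graph G, γ_{r2}(G) ≥ ⌈(2·diam(G) + 2)/5⌉. -/

import Mathlib

open Finset

/-- A `k`-rainbow dominating function: every vertex assigned `∅` sees all `k` colors
among its neighbors. -/
def SimpleGraph.IsRainbowDF {V : Type*} {k : ℕ} (G : SimpleGraph V)
    (f : V → Finset (Fin k)) : Prop :=
  ∀ v, f v = ∅ → ∀ c : Fin k, ∃ u, G.Adj v u ∧ c ∈ f u

/-- The `k`-rainbow domination number. -/
noncomputable def SimpleGraph.rainbowNum {V : Type*} [Fintype V] (G : SimpleGraph V)
    (k : ℕ) : ℕ :=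
  sInf {w | ∃ f : V → Finset (Fin k), G.IsRainbowDF f ∧ w = ∑ v, (f v).card}

/-- `S` is a dominating set of `G`. -/
def SimpleGraph.IsDomSet {V : Type*} (G : SimpleGraph V) (S : Set V) : Prop :=
  ∀ v, v ∉ S → ∃ u ∈ S, G.Adj v u

/-- The domination number. -/
noncomputable def SimpleGraph.domNum {V : Type*} [Fintype V] (G : SimpleGraph V) : ℕ :=
  sInf {n | ∃ S : Finset V, G.IsDomSet ↑S ∧ n = S.card}

-- distance along a walk
lemma dist_getVert_le {V : Type*} {G : SimpleGraph V} (hG : G.Connected) :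
    ∀ {u v : V} (p : G.Walk u v) (i j : ℕ), i ≤ j →
      G.dist (p.getVert i) (p.getVert j) ≤ j - i := by
  intro u v p
  induction p with
  | nil => intro i j _; simp [SimpleGraph.Walk.getVert, SimpleGraph.dist_self]
  | @cons a b c hadj q ih =>
    intro i j hij
    cases i with
    | zero =>
      cases j with
      | zero => simp
      | succ k =>
        rw [SimpleGraph.Walk.getVert_cons_succ]
        have h1 : G.dist a b ≤ 1 := by
          have := G.dist_le (SimpleGraph.Walk.cons hadj SimpleGraph.Walk.nil)
          simpa using this
        have h2 := ih 0 k (Nat.zero_le _)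
        calc G.dist ((SimpleGraph.Walk.cons hadj q).getVert 0) (q.getVert k)
            ≤ G.dist a b + G.dist b (q.getVert k) := by
              simpa using hG.dist_triangle (u := a) (v := b) (w := q.getVert k)
          _ ≤ 1 + k := by
              simpa [SimpleGraph.Walk.getVert_zero] using Nat.add_le_add h1 (by simpa using h2)
          _ = k + 1 - 0 := by omega
    | succ a' =>
      cases j with
      | zero => omega
      | succ b' =>
        rw [SimpleGraph.Walk.getVert_cons_succ, SimpleGraph.Walk.getVert_cons_succ]
        have := ih a' b' (by omega)
        omega

lemma dist_getVert_eq {V : Type*} {G : SimpleGraph V} (hG : G.Connected)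
    {u v : V} (p : G.Walk u v) (hp : p.length = G.dist u v)
    {i j : ℕ} (hij : i ≤ j) (hj : j ≤ p.length) :
    G.dist (p.getVert i) (p.getVert j) = j - i := by
  refine le_antisymm (dist_getVert_le hG p i j hij) ?_
  have h1 : G.dist u (p.getVert i) ≤ i := by
    simpa using dist_getVert_le hG p 0 i (Nat.zero_le _)
  have h2 : G.dist (p.getVert j) v ≤ p.length - j := by
    have := dist_getVert_le hG p j p.length hj
    simpa [SimpleGraph.Walk.getVert_length] using this
  have h3 : G.dist u v ≤ G.dist u (p.getVert i) + G.dist (p.getVert i) (p.getVert j)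
      + G.dist (p.getVert j) v := by
    calc G.dist u v ≤ G.dist u (p.getVert j) + G.dist (p.getVert j) v := hG.dist_triangle
      _ ≤ G.dist u (p.getVert i) + G.dist (p.getVert i) (p.getVert j)
          + G.dist (p.getVert j) v := by
            have := hG.dist_triangle (u := u) (v := p.getVert i) (w := p.getVert j)
            omega
  omega

/-- For any connected graph `G`, `γ_{r2}(G) ≥ ⌈(2·diam(G) + 2)/5⌉`. -/
theorem rainbow2_ge_diam_bound {V : Type*} [Fintype V] (G : SimpleGraph V)
    (hG : G.Connected) :
    ⌈(2 * (G.diam : ℚ) + 2) / 5⌉ ≤ (G.rainbowNum 2 : ℤ) := by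
  classical
  have hne : Nonempty V := hG.nonempty
  -- get an optimal rainbow dominating function
  have hset : {w | ∃ f : V → Finset (Fin 2), G.IsRainbowDF f ∧ w = ∑ v, (f v).card}.Nonempty := by
    refine ⟨∑ v : V, (Finset.univ : Finset (Fin 2)).card, fun _ => Finset.univ, ?_, rfl⟩
    intro v hv
    exact absurd hv (Finset.univ_nonempty.ne_empty)
  obtain ⟨f, hf, hw⟩ : ∃ f : V → Finset (Fin 2), G.IsRainbowDF f ∧
      G.rainbowNum 2 = ∑ v, (f v).card := Nat.sInf_mem hset
  clear hset
  -- get a diametral geodesic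
  obtain ⟨u, v, huv⟩ := G.exists_dist_eq_diam
  obtain ⟨p, hp⟩ := hG.exists_walk_length_eq_dist u v
  set d := G.diam with hd
  have hplen : p.length = d := by rw [hp, huv]
  set g : ℕ → V := p.getVert with hg
  set c : V → ℕ := fun x => (f x).card with hc
  -- injectivity
  have hinj : ∀ i ∈ Finset.range (d+1), ∀ j ∈ Finset.range (d+1), g i = g j → i = j := by
    intro i hi j hj hgij
    simp only [Finset.mem_range] at hi hj
    have hi' : i ≤ p.length := by rw [hplen]; omega
    have hj' : j ≤ p.length := by rw [hplen]; omega
    rcases le_total i j with h | h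
    · have := dist_getVert_eq hG p hp h hj'
      rw [← hg, hgij, SimpleGraph.dist_self] at this
      omega
    · have := dist_getVert_eq hG p hp h hi'
      rw [← hg, hgij, SimpleGraph.dist_self] at this
      omega
  set A := (Finset.range (d+1)).filter (fun i => f (g i) = ∅) with hA
  set B := (Finset.range (d+1)).filter (fun i => ¬ (f (g i) = ∅)) with hB
  -- Claim 1 : for i ∈ A, the neighbors of g i have total weight ≥ 2
  have claim1 : ∀ i ∈ A, 2 ≤ ∑ x ∈ Finset.univ.filter (fun x => G.Adj (g i) x), c x := by
    intro i hi
    have hie : f (g i) = ∅ := (Finset.mem_filter.mp hi).2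
    set N := Finset.univ.filter (fun x => G.Adj (g i) x) with hN
    have hsub : (Finset.univ : Finset (Fin 2)) ⊆ N.biUnion f := by
      intro cc _
      obtain ⟨x, hadj, hcx⟩ := hf (g i) hie cc
      exact Finset.mem_biUnion.mpr ⟨x, Finset.mem_filter.mpr ⟨Finset.mem_univ _, hadj⟩, hcx⟩
    calc (2 : ℕ) = (Finset.univ : Finset (Fin 2)).card := by simp
      _ ≤ (N.biUnion f).card := Finset.card_le_card hsub
      _ ≤ ∑ x ∈ N, (f x).card := Finset.card_biUnion_le
  -- window bound
  have window : ∀ x : V, (A.filter (fun i => G.Adj (g i) x)).card ≤ 3 := by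
    intro x
    set S := A.filter (fun i => G.Adj (g i) x) with hS
    rcases S.eq_empty_or_nonempty with h | h
    · simp [h]
    · set m := S.min' h with hm
      have hmem : ∀ i ∈ S, i ∈ Finset.range (d+1) ∧ G.Adj (g i) x := by
        intro i hi
        have := Finset.mem_filter.mp hi
        exact ⟨(Finset.mem_filter.mp this.1).1, this.2⟩
      have hmS := S.min'_mem h
      have hsub : S ⊆ Finset.Icc m (m+2) := by
        intro i hi
        have hmi : m ≤ i := S.min'_le i hi
        have hiR := (hmem i hi).1
        simp only [Finset.mem_range] at hiR
        have hiL : i ≤ p.length := by rw [hplen]; omega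
        have hdist : G.dist (g m) (g i) = i - m :=
          dist_getVert_eq hG p hp hmi hiL
        have h2 : G.dist (g m) (g i) ≤ 2 := by
          have t1 : G.dist (g m) x ≤ 1 := by
            have := G.dist_le (SimpleGraph.Walk.cons (hmem m hmS).2 SimpleGraph.Walk.nil)
            simpa using this
          have t2 : G.dist x (g i) ≤ 1 := by
            have := G.dist_le (SimpleGraph.Walk.cons ((hmem i hi).2.symm) SimpleGraph.Walk.nil)
            simpa using this
          have := hG.dist_triangle (u := g m) (v := x) (w := g i)
          omega
        simp only [Finset.mem_Icc]
        omega
      calc S.card ≤ (Finset.Icc m (m+2)).card := Finset.card_le_card hsub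
        _ = 3 := by rw [Nat.card_Icc]; omega
  -- Claim 2 : 2 * A.card ≤ 3 * w
  have claim2 : 2 * A.card ≤ 3 * G.rainbowNum 2 := by
    have step1 : 2 * A.card ≤ ∑ i ∈ A, ∑ x ∈ Finset.univ.filter (fun x => G.Adj (g i) x), c x := by
      calc 2 * A.card = ∑ _i ∈ A, 2 := by rw [Finset.sum_const, smul_eq_mul]; ring
        _ ≤ _ := Finset.sum_le_sum claim1
    have step2 : ∑ i ∈ A, ∑ x ∈ Finset.univ.filter (fun x => G.Adj (g i) x), c x
        ≤ 3 * G.rainbowNum 2 := by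
      have e1 : ∑ i ∈ A, ∑ x ∈ Finset.univ.filter (fun x => G.Adj (g i) x), c x
          = ∑ x ∈ Finset.univ, ∑ i ∈ A.filter (fun i => G.Adj (g i) x), c x := by
        simp only [Finset.sum_filter]
        exact Finset.sum_comm
      rw [e1, hw]
      calc ∑ x ∈ Finset.univ, ∑ i ∈ A.filter (fun i => G.Adj (g i) x), c x
          = ∑ x ∈ Finset.univ, (A.filter (fun i => G.Adj (g i) x)).card * c x := by
            refine Finset.sum_congr rfl fun x _ => ?_
            rw [Finset.sum_const, smul_eq_mul]
        _ ≤ ∑ x ∈ Finset.univ, 3 * c x :=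
            Finset.sum_le_sum fun x _ => Nat.mul_le_mul_right _ (window x)
        _ = 3 * Finset.univ.sum c := by rw [Finset.mul_sum]
    exact le_trans step1 step2
  -- Claim 3 : B.card ≤ w
  have claim3 : B.card ≤ G.rainbowNum 2 := by
    have h1 : B.card ≤ ∑ i ∈ B, c (g i) := by
      calc B.card = ∑ _i ∈ B, 1 := by simp
        _ ≤ ∑ i ∈ B, c (g i) := by
            refine Finset.sum_le_sum fun i hi => ?_
            have : ¬ f (g i) = ∅ := (Finset.mem_filter.mp hi).2
            have := Finset.card_pos.mpr (Finset.nonempty_iff_ne_empty.mpr this)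
            simpa [hc] using this
    have h2 : ∑ i ∈ B, c (g i) = ∑ x ∈ B.image g, c x := by
      rw [Finset.sum_image]
      intro i hi j hj hgij
      exact hinj i (Finset.mem_filter.mp hi).1 j (Finset.mem_filter.mp hj).1 hgij
    have h3 : ∑ x ∈ B.image g, c x ≤ ∑ x ∈ Finset.univ, c x :=
      Finset.sum_le_sum_of_subset (Finset.subset_univ _)
    rw [hw]
    exact le_trans h1 (le_trans (le_of_eq h2) h3)
  -- combine
  have hcard : A.card + B.card = d + 1 := by
    rw [hA, hB]
    rw [Finset.card_filter_add_card_filter_not, Finset.card_range]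
  have key : 2 * (d + 1) ≤ 5 * G.rainbowNum 2 := by omega
  rw [Int.ceil_le]
  have hd5 : ((2 * (d : ℚ) + 2)) ≤ 5 * (G.rainbowNum 2 : ℚ) := by
    have := (Nat.cast_le (α := ℚ)).mpr key
    push_cast at this ⊢
    linarith
  rw [div_le_iff₀ (by norm_num : (0:ℚ) < 5)]
  push_cast
  linarith
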